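/- Let p be a prime and G a group of order p^3 of maximal class (i.e. nilpotency class 2, equivalently non-abelian). Then CD(G) is exactly the set of subgroups H of G with Z(G) ≤ H; it is a quasi-antichain of width p+1, with every subgroup strictly between Z(G) and G abelian. -/

import Mathlib

/-- The Chermak-Delgado measure of a subgroup `H` of `G`: `|H| · |C_G(H)|`. -/
noncomputable def cdMeasure (G : Type*) [Group G] (H : Subgroup G) : ℕ :=
  Nat.card H * Nat.card (Subgroup.centralizer (H : Set G))

/-- The Chermak-Delgado lattice of `G`: the set of subgroups whose
Chermak-Delgado measure is maximal. -/
def CD (G : Type*) [Group G] : Set (Subgroup G) :=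
  {H : Subgroup G | ∀ K : Subgroup G, cdMeasure G K ≤ cdMeasure G H}

section Aux

variable {p : ℕ} {G : Type*} [Group G] [Finite G]

open Subgroup

lemma aux_sup_ne_top (hnab : ∃ x y : G, x * y ≠ y * x) (H : Subgroup G)
    (hH : ∀ a b : G, a ∈ H → b ∈ H → a * b = b * a) :
    Subgroup.center G ⊔ H ≠ ⊤ := by
  intro heq
  obtain ⟨x, y, hxy⟩ := hnab
  apply hxy
  have key : ∀ g : G, ∃ z h : G, z ∈ Subgroup.center G ∧ h ∈ H ∧ g = z * h := by
    intro g
    have hg : g ∈ ((Subgroup.center G ⊔ H : Subgroup G) : Set G) := by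
      rw [heq]; exact Set.mem_univ g
    rw [Subgroup.normal_mul] at hg
    obtain ⟨z, hz, h, hh, hzh⟩ := hg
    exact ⟨z, h, hz, hh, hzh.symm⟩
  obtain ⟨z1, h1, hz1, hh1, rfl⟩ := key x
  obtain ⟨z2, h2, hz2, hh2, rfl⟩ := key y
  have e1 := Subgroup.mem_center_iff.mp hz1
  have e2 := Subgroup.mem_center_iff.mp hz2
  have e3 := hH h1 h2 hh1 hh2
  calc z1 * h1 * (z2 * h2) = z1 * (h1 * z2) * h2 := by group
    _ = z1 * (z2 * h1) * h2 := by rw [e2 h1]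
    _ = z2 * z1 * (h1 * h2) := by rw [← e2 z1]; group
    _ = z2 * z1 * (h2 * h1) := by rw [e3]
    _ = z2 * (z1 * h2) * h1 := by group
    _ = z2 * (h2 * z1) * h1 := by rw [e1 h2]
    _ = z2 * h2 * (z1 * h1) := by group

lemma aux_not_cyclic (hnab : ∃ x y : G, x * y ≠ y * x) :
    ¬ IsCyclic (G ⧸ Subgroup.center G) := by
  intro h
  obtain ⟨x, y, hxy⟩ := hnab
  exact hxy ((commGroupOfCyclicCenterQuotient (QuotientGroup.mk' _)
    (QuotientGroup.ker_mk' _).le).mul_comm x y)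

lemma aux_card_center (hp : p.Prime) (hcard : Nat.card G = p ^ 3)
    (hnab : ∃ x y : G, x * y ≠ y * x) :
    Nat.card (Subgroup.center G) = p := by
  haveI := Fact.mk hp
  obtain ⟨k, hk0, hk⟩ := IsPGroup.card_center_eq_prime_pow hcard (by norm_num)
  rcases Nat.lt_or_ge k 2 with h | h
  · have : k = 1 := by omega
    rw [hk, this, pow_one]
  · exfalso
    apply aux_not_cyclic hnab
    apply isCyclic_of_card_dvd_prime (p := p)
    have h1 : (Subgroup.center G).index * p ^ k = p ^ 3 := by
      rw [← hk, Subgroup.index_mul_card, hcard]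
    have h2 : (Subgroup.center G).index ∣ p ^ 3 := ⟨p ^ k, h1.symm⟩
    obtain ⟨j, hj3, hjd⟩ := (Nat.dvd_prime_pow hp).mp h2
    rw [hjd, ← pow_add] at h1
    have hjk := Nat.pow_right_injective hp.two_le h1
    rw [← Subgroup.index_eq_card, hjd]
    have : p ^ j ∣ p ^ 1 := pow_dvd_pow p (by omega)
    simpa using this

lemma aux_card_pow (hp : p.Prime) (hcard : Nat.card G = p ^ 3) (H : Subgroup G) :
    ∃ d ≤ 3, Nat.card H = p ^ d :=
  (Nat.dvd_prime_pow hp).mp (hcard ▸ Subgroup.card_subgroup_dvd_card H)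

lemma aux_comm_of_sq (hp : p.Prime) (H : Subgroup G) (h2 : Nat.card H = p ^ 2) :
    ∀ a b : G, a ∈ H → b ∈ H → a * b = b * a := by
  haveI := Fact.mk hp
  intro a b ha hb
  have := IsPGroup.commutative_of_card_eq_prime_sq (G := H) h2 ⟨a, ha⟩ ⟨b, hb⟩
  exact Subtype.ext_iff.mp this

lemma aux_sq_contains_center (hp : p.Prime) (hcard : Nat.card G = p ^ 3)
    (hnab : ∃ x y : G, x * y ≠ y * x) (H : Subgroup G) (h2 : Nat.card H = p ^ 2) :
    Subgroup.center G ≤ H := by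
  by_contra hzh
  have hK := aux_sup_ne_top hnab H (aux_comm_of_sq hp H h2)
  obtain ⟨d, hd3, hKd⟩ := aux_card_pow hp hcard (Subgroup.center G ⊔ H)
  have hHK : H ≤ Subgroup.center G ⊔ H := le_sup_right
  have hdvd : p ^ 2 ∣ p ^ d := by
    have := Subgroup.card_dvd_of_le hHK
    rwa [h2, hKd] at this
  have hd2 : 2 ≤ d := (Nat.pow_dvd_pow_iff_le_right hp.one_lt).mp hdvd
  have hdne : d ≠ 3 := by
    intro h
    exact hK (Subgroup.eq_top_of_card_eq _ (by rw [hKd, h, hcard]))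
  have hd : d = 2 := by omega
  have heq : H = Subgroup.center G ⊔ H :=
    Subgroup.eq_of_le_of_card_ge hHK (by rw [hKd, h2, hd])
  exact hzh (heq ▸ le_sup_left)

lemma aux_measure_of_le (hp : p.Prime) (hcard : Nat.card G = p ^ 3)
    (hnab : ∃ x y : G, x * y ≠ y * x) (H : Subgroup G)
    (hZH : Subgroup.center G ≤ H) : cdMeasure G H = p ^ 4 := by
  obtain ⟨d, hd3, hHd⟩ := aux_card_pow hp hcard H
  have hZ := aux_card_center hp hcard hnab
  have hd1 : 1 ≤ d := by
    have hdv := Subgroup.card_dvd_of_le hZH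
    rw [hZ, hHd] at hdv
    have : p ^ 1 ∣ p ^ d := by rwa [pow_one]
    exact (Nat.pow_dvd_pow_iff_le_right hp.one_lt).mp this
  interval_cases d
  · -- d = 1 : H = center
    have heq : Subgroup.center G = H :=
      Subgroup.eq_of_le_of_card_ge hZH (by rw [hHd, hZ, pow_one])
    have hc : Subgroup.centralizer ((H : Subgroup G) : Set G) = ⊤ := by
      rw [← heq]
      exact Subgroup.centralizer_eq_top_iff_subset.mpr (fun g hg => hg)
    rw [cdMeasure, hc, Subgroup.card_top, hcard, hHd]
    ring
  · -- d = 2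
    have hcomm := aux_comm_of_sq hp H hHd
    have hle : H ≤ Subgroup.centralizer (H : Set G) := fun x hx =>
      Subgroup.mem_centralizer_iff.mpr (fun y hy => hcomm y x hy hx)
    have hne : Subgroup.centralizer (H : Set G) ≠ ⊤ := by
      intro h
      have hsub : H ≤ Subgroup.center G := Subgroup.centralizer_eq_top_iff_subset.mp h
      have hdv := Subgroup.card_dvd_of_le hsub
      rw [hZ, hHd] at hdv
      have : p ^ 2 ∣ p ^ 1 := by rwa [pow_one]
      exact absurd ((Nat.pow_dvd_pow_iff_le_right hp.one_lt).mp this) (by omega)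
    obtain ⟨e, he3, hce⟩ := aux_card_pow hp hcard (Subgroup.centralizer (H : Set G))
    have he2 : 2 ≤ e := by
      have hdv := Subgroup.card_dvd_of_le hle
      rw [hHd, hce] at hdv
      exact (Nat.pow_dvd_pow_iff_le_right hp.one_lt).mp hdv
    have hene : e ≠ 3 := by
      intro h
      exact hne (Subgroup.eq_top_of_card_eq _ (by rw [hce, h, hcard]))
    have he : e = 2 := by omega
    rw [cdMeasure, hHd, hce, he]
    ring
  · -- d = 3
    have heq : H = ⊤ := Subgroup.eq_top_of_card_eq _ (by rw [hHd, hcard])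
    subst heq
    rw [cdMeasure, Subgroup.coe_top, Subgroup.centralizer_univ, Subgroup.card_top, hcard, hZ]
    ring

lemma aux_measure_of_not_le (hp : p.Prime) (hcard : Nat.card G = p ^ 3)
    (hnab : ∃ x y : G, x * y ≠ y * x) (H : Subgroup G)
    (hZH : ¬ Subgroup.center G ≤ H) : cdMeasure G H ≤ p ^ 3 := by
  obtain ⟨d, hd3, hHd⟩ := aux_card_pow hp hcard H
  have hZ := aux_card_center hp hcard hnab
  have hd2 : d ≠ 2 := fun h =>
    hZH (aux_sq_contains_center hp hcard hnab H (h ▸ hHd))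
  have hd3' : d ≠ 3 := by
    intro h
    exact hZH ((Subgroup.eq_top_of_card_eq _ (by rw [hHd, h, hcard])) ▸ le_top)
  interval_cases d
  · -- d = 0
    rw [cdMeasure, hHd, pow_zero, one_mul, ← hcard]
    exact Subgroup.card_le_card_group _
  · -- d = 1
    have hne : Subgroup.centralizer (H : Set G) ≠ ⊤ := by
      intro h
      have hsub : H ≤ Subgroup.center G := Subgroup.centralizer_eq_top_iff_subset.mp h
      have : H = Subgroup.center G :=
        Subgroup.eq_of_le_of_card_ge hsub (by rw [hHd, hZ, pow_one])
      exact hZH (le_of_eq this.symm)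
    obtain ⟨e, he3, hce⟩ := aux_card_pow hp hcard (Subgroup.centralizer (H : Set G))
    have hene : e ≠ 3 := by
      intro h
      exact hne (Subgroup.eq_top_of_card_eq _ (by rw [hce, h, hcard]))
    rw [cdMeasure, hHd, hce, pow_one]
    calc p * p ^ e ≤ p * p ^ 2 :=
          Nat.mul_le_mul_left _ (Nat.pow_le_pow_right hp.one_lt.le (by omega))
      _ = p ^ 3 := by ring
  · exact absurd rfl hd2
  · exact absurd rfl hd3'

lemma aux_card_mid (hp : p.Prime) (hcard : Nat.card G = p ^ 3)
    (hnab : ∃ x y : G, x * y ≠ y * x) (H : Subgroup G)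
    (h1 : Subgroup.center G < H) (h2 : H < ⊤) : Nat.card H = p ^ 2 := by
  obtain ⟨d, hd3, hHd⟩ := aux_card_pow hp hcard H
  have hZ := aux_card_center hp hcard hnab
  have hd1 : 1 ≤ d := by
    have hdv := Subgroup.card_dvd_of_le h1.le
    rw [hZ, hHd] at hdv
    have : p ^ 1 ∣ p ^ d := by rwa [pow_one]
    exact (Nat.pow_dvd_pow_iff_le_right hp.one_lt).mp this
  have hdne1 : d ≠ 1 := by
    intro h
    exact h1.ne (Subgroup.eq_of_le_of_card_ge h1.le (by rw [hHd, hZ, h, pow_one]))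
  have hdne3 : d ≠ 3 := by
    intro h
    exact h2.ne (Subgroup.eq_top_of_card_eq _ (by rw [hHd, h, hcard]))
  have : d = 2 := by omega
  rw [hHd, this]

lemma aux_Hx (hp : p.Prime) (hcard : Nat.card G = p ^ 3)
    (hnab : ∃ x y : G, x * y ≠ y * x) (x : G) (hx : x ∉ Subgroup.center G) :
    Subgroup.center G < Subgroup.center G ⊔ Subgroup.zpowers x ∧
      Subgroup.center G ⊔ Subgroup.zpowers x < ⊤ := by
  have hcomm : ∀ a b : G, a ∈ Subgroup.zpowers x → b ∈ Subgroup.zpowers x → a * b = b * a := by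
    intro a b ha hb
    obtain ⟨m, rfl⟩ := Subgroup.mem_zpowers_iff.mp ha
    obtain ⟨n, rfl⟩ := Subgroup.mem_zpowers_iff.mp hb
    rw [← zpow_add, ← zpow_add, add_comm]
  have hne := aux_sup_ne_top hnab _ hcomm
  have hxmem : x ∈ Subgroup.center G ⊔ Subgroup.zpowers x :=
    Subgroup.mem_sup_right (Subgroup.mem_zpowers x)
  constructor
  · exact lt_of_le_of_ne le_sup_left (fun h => hx (h ▸ hxmem))
  · exact lt_of_le_of_ne le_top hne

end Aux

theorem stmt_17 (p : ℕ) (hp : p.Prime) (G : Type*) [Group G] [Finite G]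
    (hcard : Nat.card G = p ^ 3) (hnab : ∃ x y : G, x * y ≠ y * x) :
    CD G = {H : Subgroup G | Subgroup.center G ≤ H} ∧
    (∀ H : Subgroup G, Subgroup.center G < H → H < ⊤ → IsMulCommutative H) ∧
    {H : Subgroup G | Subgroup.center G < H ∧ H < ⊤}.ncard = p + 1 := by
  classical
  haveI : Fintype G := Fintype.ofFinite G
  have hZ := aux_card_center hp hcard hnab
  refine ⟨?_, fun H h1 h2 => ?_, ?_⟩
  · -- CD G = {H | center ≤ H}
    ext H
    simp only [CD, Set.mem_setOf_eq]
    constructor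
    · intro hcd
      by_contra hZH
      have h1 := hcd (Subgroup.center G)
      have h2 := aux_measure_of_le hp hcard hnab (Subgroup.center G) le_rfl
      have h3 := aux_measure_of_not_le hp hcard hnab H hZH
      have : p ^ 4 ≤ p ^ 3 := h2 ▸ le_trans h1 h3
      exact absurd ((pow_le_pow_iff_right₀ hp.one_lt).mp this) (by omega)
    · intro hZH K
      rw [aux_measure_of_le hp hcard hnab H hZH]
      by_cases hZK : Subgroup.center G ≤ K
      · rw [aux_measure_of_le hp hcard hnab K hZK]
      · exact le_trans (aux_measure_of_not_le hp hcard hnab K hZK)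
          (Nat.pow_le_pow_right hp.one_lt.le (by omega))
  · -- middle subgroups are commutative
    have hc := aux_comm_of_sq hp H (aux_card_mid hp hcard hnab H h1 h2)
    exact ⟨⟨fun a b => Subtype.ext (hc a b a.2 b.2)⟩⟩
  · -- counting
    set Z := Subgroup.center G with hZdef
    set S : Set (Subgroup G) := {H : Subgroup G | Z < H ∧ H < ⊤} with hSdef
    have hfin : S.Finite := Set.toFinite S
    rw [Set.ncard_eq_toFinset_card S hfin]
    set F : Finset (Subgroup G) := hfin.toFinset with hFdef
    set D : Subgroup G → Finset G :=
      fun H => Finset.univ.filter (fun g => g ∈ H ∧ g ∉ Z) with hDdef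
    -- every H in F equals Z ⊔ zpowers x for any x ∈ H \ Z
    have key : ∀ H ∈ F, ∀ x : G, x ∈ H → x ∉ Z → H = Z ⊔ Subgroup.zpowers x := by
      intro H hH x hx hxz
      rw [hFdef, Set.Finite.mem_toFinset] at hH
      obtain ⟨h1, h2⟩ := hH
      obtain ⟨g1, g2⟩ := aux_Hx hp hcard hnab x hxz
      have hle : Z ⊔ Subgroup.zpowers x ≤ H := sup_le h1.le (Subgroup.zpowers_le.mpr hx)
      refine (Subgroup.eq_of_le_of_card_ge hle ?_).symm
      rw [aux_card_mid hp hcard hnab H h1 h2,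
        aux_card_mid hp hcard hnab _ g1 g2]
    -- the D H for H ∈ F partition the complement of Z
    have hcover : Finset.univ.filter (fun g : G => g ∉ Z) = F.biUnion D := by
      ext g
      simp only [Finset.mem_filter, Finset.mem_univ, true_and, Finset.mem_biUnion, hDdef,
        hFdef, Set.Finite.mem_toFinset]
      constructor
      · intro hg
        obtain ⟨g1, g2⟩ := aux_Hx hp hcard hnab g hg
        exact ⟨Z ⊔ Subgroup.zpowers g, ⟨g1, g2⟩,
          Subgroup.mem_sup_right (Subgroup.mem_zpowers g), hg⟩
      · rintro ⟨H, _, _, hg⟩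
        exact hg
    have hdisj : ∀ H1 ∈ F, ∀ H2 ∈ F, H1 ≠ H2 → Disjoint (D H1) (D H2) := by
      intro H1 h1 H2 h2 hne
      rw [Finset.disjoint_left]
      intro g hg1 hg2
      rw [hDdef] at hg1 hg2
      simp only [Finset.mem_filter, Finset.mem_univ, true_and] at hg1 hg2
      exact hne ((key H1 h1 g hg1.1 hg1.2).trans (key H2 h2 g hg2.1 hg2.2).symm)
    have hDcard : ∀ H ∈ F, (D H).card = p ^ 2 - p := by
      intro H hH
      have hHS : Z < H ∧ H < ⊤ := (Set.Finite.mem_toFinset hfin).mp hH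
      have hcardH := aux_card_mid hp hcard hnab H hHS.1 hHS.2
      have e1 : D H = (Finset.univ.filter (fun g : G => g ∈ H)) \
          (Finset.univ.filter (fun g : G => g ∈ Z)) := by
        ext g
        simp only [hDdef, Finset.mem_filter, Finset.mem_univ, true_and, Finset.mem_sdiff]
      have hsub : (Finset.univ.filter (fun g : G => g ∈ Z)) ⊆
          (Finset.univ.filter (fun g : G => g ∈ H)) := by
        intro g hg
        simp only [Finset.mem_filter, Finset.mem_univ, true_and] at hg ⊢
        exact hHS.1.le hg
      have c1 : (Finset.univ.filter (fun g : G => g ∈ H)).card = p ^ 2 := by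
        rw [← hcardH, Nat.card_eq_fintype_card, Fintype.card_subtype]
      have c2 : (Finset.univ.filter (fun g : G => g ∈ Z)).card = p := by
        rw [← hZ, Nat.card_eq_fintype_card, Fintype.card_subtype]
      rw [e1, Finset.card_sdiff_of_subset hsub, c1, c2]
    -- cardinality computation
    have hcompl : (Finset.univ.filter (fun g : G => g ∉ Z)).card = p ^ 3 - p := by
      have : (Finset.univ.filter (fun g : G => g ∉ Z)) =
          Finset.univ \ (Finset.univ.filter (fun g : G => g ∈ Z)) := by
        ext g; simp
      rw [this, Finset.card_sdiff_of_subset (Finset.filter_subset _ _), Finset.card_univ]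
      have c2 : (Finset.univ.filter (fun g : G => g ∈ Z)).card = p := by
        rw [← hZ, Nat.card_eq_fintype_card, Fintype.card_subtype]
      rw [c2, ← Nat.card_eq_fintype_card, hcard]
    have hbig : p ^ 3 - p = F.card * (p ^ 2 - p) := by
      rw [← hcompl, hcover, Finset.card_biUnion hdisj]
      rw [Finset.sum_congr rfl hDcard, Finset.sum_const, smul_eq_mul]
    have hple : p ≤ p ^ 2 := Nat.le_self_pow (by norm_num) p
    have hple3 : p ≤ p ^ 3 := Nat.le_self_pow (by norm_num) p
    have heq2 : (p + 1) * (p ^ 2 - p) = p ^ 3 - p := by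
      zify [hple, hple3]; ring
    have hpos : 0 < p ^ 2 - p := by
      have h2 := hp.two_le
      have : p < p ^ 2 := by nlinarith
      omega
    apply Nat.eq_of_mul_eq_mul_right hpos
    rw [← hbig, heq2]
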